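/- Let q be a prime number and l an integer with l ≥ q and l ≡ 0 (mod q), and let B = B(q,l). Then the characteristic polynomial of the real q²×q² matrix B Bᵀ equals (X − ql)·(X − l)^{q(q−1)}·X^{q−1}. Equivalently, B has a simple singular value √(ql), q(q−1) singular values equal to √l, and q−1 singular values equal to 0. -/

import Mathlib

open Matrix Polynomial

/-- The `q × q` cyclic-shift permutation matrix over `ℝ`:
`P i j = 1` iff `j ≡ i - 1 (mod q)`. -/
def cyclicShift (q : ℕ) : Matrix (Fin q) (Fin q) ℝ :=
  Matrix.of fun i j => if (j : ZMod q) = (i : ZMod q) - 1 then 1 else 0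

/-- The `q² × lq` array-code matrix `B(q,l)`, with `q` block-rows and `l` block-columns
of `q × q` blocks, whose `(i,j)` block (`0`-indexed) is `P^(i*j)`. -/
def arrayB (q l : ℕ) : Matrix (Fin q × Fin q) (Fin l × Fin q) ℝ :=
  Matrix.of fun r c => (cyclicShift q ^ ((r.1 : ℕ) * (c.1 : ℕ))) r.2 c.2

namespace ArrayBAux

open Finset Kronecker

variable {q : ℕ}

/-- The equivalence between `Fin q` and `ZMod q`. -/
def finZMod (q : ℕ) [NeZero q] : Fin q ≃ ZMod q where
  toFun j := ((j : ℕ) : ZMod q)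
  invFun x := ⟨x.val, x.val_lt⟩
  left_inv j := by
    ext
    simp [ZMod.val_cast_of_lt j.isLt]
  right_inv x := ZMod.natCast_rightInverse x

lemma fin_cast_inj [NeZero q] (a b : Fin q) : ((a : ZMod q) = (b : ZMod q)) ↔ a = b :=
  ⟨fun h => (finZMod q).injective h, fun h => by rw [h]⟩

lemma sum_indicator [NeZero q] (z : ZMod q) :
    ∑ c : Fin q, (if (c : ZMod q) = z then (1 : ℝ) else 0) = 1 := by
  rw [show (∑ c : Fin q, if (c : ZMod q) = z then (1 : ℝ) else 0)
      = ∑ x : ZMod q, if x = z then (1 : ℝ) else 0 from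
    Fintype.sum_bijective (finZMod q) (finZMod q).bijective _ _ (fun c => rfl)]
  simp [Finset.sum_ite_eq']

lemma sum_two_indicators [NeZero q] (x y : ZMod q) :
    ∑ c : Fin q, (if (c : ZMod q) = x then (1 : ℝ) else 0) *
      (if (c : ZMod q) = y then (1 : ℝ) else 0)
      = if x = y then (1 : ℝ) else 0 := by
  rcases eq_or_ne x y with rfl | h
  · rw [if_pos rfl]
    rw [show (∑ c : Fin q, (if (c : ZMod q) = x then (1 : ℝ) else 0) *
      (if (c : ZMod q) = x then (1 : ℝ) else 0))
        = ∑ c : Fin q, (if (c : ZMod q) = x then (1 : ℝ) else 0) from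
      Finset.sum_congr rfl fun c _ => by split_ifs <;> simp]
    exact sum_indicator x
  · rw [if_neg h]
    refine Finset.sum_eq_zero fun c _ => ?_
    split_ifs with h1 h2 <;> simp_all

lemma cyclicShift_pow [NeZero q] (k : ℕ) (a c : Fin q) :
    (cyclicShift q ^ k) a c
      = if (c : ZMod q) = (a : ZMod q) - (k : ZMod q) then 1 else 0 := by
  induction k generalizing c with
  | zero =>
    rw [pow_zero, Matrix.one_apply]
    have : ((c : ZMod q) = (a : ZMod q) - ((0 : ℕ) : ZMod q)) ↔ a = c := by
      rw [Nat.cast_zero, sub_zero, fin_cast_inj, eq_comm]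
    rw [if_congr this.symm rfl rfl]
  | succ k ih =>
    rw [pow_succ, Matrix.mul_apply]
    have step : ∀ c' : Fin q,
        (cyclicShift q ^ k) a c' * cyclicShift q c' c
          = (if (c' : ZMod q) = (a : ZMod q) - (k : ZMod q) then (1:ℝ) else 0) *
            (if (c' : ZMod q) = (c : ZMod q) + 1 then (1:ℝ) else 0) := by
      intro c'
      rw [ih c']
      congr 1
      show (if (c : ZMod q) = (c' : ZMod q) - 1 then (1:ℝ) else 0) = _
      have : ((c : ZMod q) = (c' : ZMod q) - 1) ↔ ((c' : ZMod q) = (c : ZMod q) + 1) := by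
        constructor <;> intro h <;> linear_combination -h
      rw [if_congr this rfl rfl]
    rw [Finset.sum_congr rfl fun c' _ => step c', sum_two_indicators]
    have : ((a : ZMod q) - (k : ZMod q) = (c : ZMod q) + 1)
        ↔ ((c : ZMod q) = (a : ZMod q) - ((k+1 : ℕ) : ZMod q)) := by
      push_cast
      constructor <;> intro h <;> linear_combination -h
    rw [if_congr this rfl rfl]

lemma sum_fin_l [NeZero q] (hq : q.Prime) {l : ℕ} (hl : q ∣ l) (d s : ZMod q) :
    ∑ j : Fin l, (if d * ((j : ℕ) : ZMod q) = s then (1 : ℝ) else 0)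
      = if d = 0 then (if s = 0 then (l : ℝ) else 0) else ((l / q : ℕ) : ℝ) := by
  haveI : Fact q.Prime := ⟨hq⟩
  obtain ⟨m, rfl⟩ := hl
  have hq0 : 0 < q := hq.pos
  have hdiv : (q * m) / q = m := Nat.mul_div_cancel_left m hq0
  set e : Fin m × Fin q ≃ Fin (q * m) := finProdFinEquiv.trans (finCongr (mul_comm m q))
    with he_def
  have he : ∀ p : Fin m × Fin q, (((e p : Fin (q * m)) : ℕ) : ZMod q)
      = ((p.2 : ℕ) : ZMod q) := by
    intro p
    have : ((e p : Fin (q * m)) : ℕ) = (p.2 : ℕ) + q * (p.1 : ℕ) := rfl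
    rw [this]
    push_cast
    simp
  rw [← Equiv.sum_comp e (fun j : Fin (q * m) =>
    if d * ((j : ℕ) : ZMod q) = s then (1 : ℝ) else 0)]
  simp only [he]
  rw [Fintype.sum_prod_type]
  have inner : (∑ b : Fin q, (if d * ((b : ℕ) : ZMod q) = s then (1 : ℝ) else 0))
      = if d = 0 then (if s = 0 then (q : ℝ) else 0) else 1 := by
    rcases eq_or_ne d 0 with rfl | hd
    · simp only [zero_mul, if_pos rfl]
      rcases eq_or_ne s 0 with rfl | hs
      · simp [Finset.card_univ]
      · simp [Ne.symm hs, hs]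
    · rw [if_neg hd]
      have hcond : ∀ x : ZMod q, (d * x = s) ↔ (x = d⁻¹ * s) := by
        intro x
        rw [eq_comm (a := x), inv_mul_eq_iff_eq_mul₀ hd, eq_comm]
      rw [Finset.sum_congr rfl fun b _ => by rw [if_congr (hcond _) rfl rfl]]
      exact sum_indicator _
  rw [Finset.sum_congr rfl fun a _ => inner, Finset.sum_const, Finset.card_univ,
    Fintype.card_fin, hdiv, nsmul_eq_mul]
  rcases eq_or_ne d 0 with rfl | hd
  · rcases eq_or_ne s 0 with rfl | hs
    · simp [mul_comm]
    · simp [hs]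
  · simp [hd]

lemma BBt_apply [NeZero q] (hq : q.Prime) {l : ℕ} (hl : q ∣ l) (i a i' b : Fin q) :
    (arrayB q l * (arrayB q l)ᵀ) (i, a) (i', b)
      = if i = i' then (if a = b then (l : ℝ) else 0) else ((l / q : ℕ) : ℝ) := by
  rw [Matrix.mul_apply, Fintype.sum_prod_type]
  have step1 : ∀ j : Fin l,
      (∑ c : Fin q, arrayB q l (i, a) (j, c) * (arrayB q l)ᵀ (j, c) (i', b))
      = if ((i : ZMod q) - (i' : ZMod q)) * ((j : ℕ) : ZMod q)
          = (a : ZMod q) - (b : ZMod q) then (1 : ℝ) else 0 := by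
    intro j
    have ha : ∀ c : Fin q, arrayB q l (i, a) (j, c)
        = if (c : ZMod q) = (a : ZMod q) - (i : ZMod q) * ((j : ℕ) : ZMod q)
          then (1:ℝ) else 0 := by
      intro c
      show (cyclicShift q ^ ((i : ℕ) * (j : ℕ))) a c = _
      rw [cyclicShift_pow]
      push_cast
      rfl
    have hb : ∀ c : Fin q, (arrayB q l)ᵀ (j, c) (i', b)
        = if (c : ZMod q) = (b : ZMod q) - (i' : ZMod q) * ((j : ℕ) : ZMod q)
          then (1:ℝ) else 0 := by
      intro c
      show (cyclicShift q ^ ((i' : ℕ) * (j : ℕ))) b c = _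
      rw [cyclicShift_pow]
      push_cast
      rfl
    rw [Finset.sum_congr rfl fun c _ => by rw [ha c, hb c], sum_two_indicators]
    have : ((a : ZMod q) - (i : ZMod q) * ((j : ℕ) : ZMod q)
          = (b : ZMod q) - (i' : ZMod q) * ((j : ℕ) : ZMod q))
        ↔ (((i : ZMod q) - (i' : ZMod q)) * ((j : ℕ) : ZMod q)
          = (a : ZMod q) - (b : ZMod q)) := by
      constructor <;> intro h <;> linear_combination -h
    rw [if_congr this rfl rfl]
  rw [Finset.sum_congr rfl fun j _ => step1 j,
    sum_fin_l hq hl ((i : ZMod q) - (i' : ZMod q)) ((a : ZMod q) - (b : ZMod q))]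
  have h1 : ((i : ZMod q) - (i' : ZMod q) = 0) = (i = i') := by
    rw [sub_eq_zero, fin_cast_inj]
  have h2 : ((a : ZMod q) - (b : ZMod q) = 0) = (a = b) := by
    rw [sub_eq_zero, fin_cast_inj]
  simp only [h1, h2]

/-- The matrix whose column `0` is all-ones and column `k ≠ 0` is `e 0 - e k`. -/
def Vm (q : ℕ) [NeZero q] : Matrix (Fin q) (Fin q) ℝ :=
  Matrix.of fun a b => if b = 0 then 1 else if a = 0 then 1 else if a = b then -1 else 0

/-- The inverse of `Vm`. -/
noncomputable def Wm (q : ℕ) [NeZero q] : Matrix (Fin q) (Fin q) ℝ :=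
  Matrix.of fun a b => (q : ℝ)⁻¹ - (if b = 0 then 0 else if a = b then 1 else 0)

lemma Vm_apply_zero [NeZero q] (a : Fin q) : Vm q a 0 = 1 := by simp [Vm]

lemma Vm_zero_apply [NeZero q] (b : Fin q) : Vm q 0 b = 1 := by
  rcases eq_or_ne b 0 with rfl | hb
  · simp [Vm]
  · simp [Vm, hb]

lemma Vm_apply_ne [NeZero q] {a b : Fin q} (ha : a ≠ 0) (hb : b ≠ 0) :
    Vm q a b = if a = b then -1 else 0 := by simp [Vm, ha, hb]

lemma Vm_colsum [NeZero q] (b : Fin q) :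
    ∑ a : Fin q, Vm q a b = if b = 0 then (q : ℝ) else 0 := by
  rcases eq_or_ne b 0 with rfl | hb
  · simp [Vm, Finset.card_univ]
  · rw [if_neg hb]
    have key : ∀ a : Fin q, Vm q a b
        = (if a = 0 then (1:ℝ) else 0) + (if a = b then (-1:ℝ) else 0) := by
      intro a
      rcases eq_or_ne a 0 with rfl | ha
      · rw [Vm_zero_apply, if_pos rfl, if_neg (by exact fun h => hb h.symm)]
        norm_num
      · rw [Vm_apply_ne ha hb, if_neg ha]
        rcases eq_or_ne a b with rfl | hab
        · norm_num
        · rw [if_neg hab]; norm_num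
    rw [Finset.sum_congr rfl fun a _ => key a, Finset.sum_add_distrib]
    simp [Finset.sum_ite_eq']

lemma Vm_rowsum [NeZero q] (a : Fin q) :
    ∑ b : Fin q, Vm q a b = if a = 0 then (q : ℝ) else 0 := by
  rcases eq_or_ne a 0 with rfl | ha
  · rw [Finset.sum_congr rfl fun b _ => Vm_zero_apply b]
    simp [Finset.card_univ]
  · rw [if_neg ha]
    have key : ∀ b : Fin q, Vm q a b
        = (if b = 0 then (1:ℝ) else 0) + (if b = a then (-1:ℝ) else 0) := by
      intro b
      rcases eq_or_ne b 0 with rfl | hb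
      · rw [Vm_apply_zero, if_pos rfl, if_neg (by exact fun h => ha h.symm)]
        norm_num
      · rw [Vm_apply_ne ha hb, if_neg hb]
        rcases eq_or_ne a b with rfl | hab
        · norm_num
        · rw [if_neg hab, if_neg (Ne.symm hab)]; norm_num
    rw [Finset.sum_congr rfl fun b _ => key b, Finset.sum_add_distrib]
    simp [Finset.sum_ite_eq']

lemma Vm_mul_Wm [NeZero q] : Vm q * Wm q = 1 := by
  have hq0 : (q : ℝ) ≠ 0 := Nat.cast_ne_zero.mpr (NeZero.ne q)
  ext a c
  rw [Matrix.mul_apply]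
  have expand : ∀ b : Fin q, Vm q a b * Wm q b c
      = Vm q a b * (q : ℝ)⁻¹
        - (if c = 0 then 0 else (if b = c then Vm q a b else 0)) := by
    intro b
    show Vm q a b * ((q : ℝ)⁻¹ - (if c = 0 then 0 else if b = c then 1 else 0)) = _
    split_ifs <;> ring
  rw [Finset.sum_congr rfl fun b _ => expand b, Finset.sum_sub_distrib,
    ← Finset.sum_mul, Vm_rowsum]
  rcases eq_or_ne c 0 with rfl | hc
  · have hz : ∀ b : Fin q,
        (if (0:Fin q) = 0 then (0:ℝ) else if b = 0 then Vm q a b else 0) = 0 :=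
      fun b => by simp
    rw [Finset.sum_congr rfl fun b _ => hz b, Finset.sum_const_zero, sub_zero,
      Matrix.one_apply]
    rcases eq_or_ne a 0 with rfl | ha
    · rw [if_pos rfl, if_pos rfl, mul_inv_cancel₀ hq0]
    · rw [if_neg ha, if_neg ha, zero_mul]
  · have hz : ∀ b : Fin q,
        (if c = 0 then (0:ℝ) else if b = c then Vm q a b else 0)
          = if b = c then Vm q a b else 0 := fun b => by rw [if_neg hc]
    rw [Finset.sum_congr rfl fun b _ => hz b,
      Finset.sum_ite_eq' Finset.univ c fun b => Vm q a b,
      if_pos (Finset.mem_univ c), Matrix.one_apply]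
    rcases eq_or_ne a 0 with rfl | ha
    · have hac : (0 : Fin q) ≠ c := fun h => hc h.symm
      rw [if_pos rfl, Vm_zero_apply, if_neg hac]
      field_simp
      norm_num
    · rw [if_neg ha, Vm_apply_ne ha hc, zero_mul]
      rcases eq_or_ne a c with rfl | hac
      · rw [if_pos rfl, if_pos rfl]; norm_num
      · rw [if_neg hac, if_neg hac]; norm_num

lemma Wm_mul_Vm [NeZero q] : Wm q * Vm q = 1 := by
  have hq0 : (q : ℝ) ≠ 0 := Nat.cast_ne_zero.mpr (NeZero.ne q)
  ext a c
  rw [Matrix.mul_apply]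
  have expand : ∀ b : Fin q, Wm q a b * Vm q b c
      = (q : ℝ)⁻¹ * Vm q b c
        - (if a = 0 then 0 else (if b = a then Vm q b c else 0)) := by
    intro b
    show ((q : ℝ)⁻¹ - (if b = 0 then 0 else if a = b then 1 else 0)) * Vm q b c = _
    rcases eq_or_ne b 0 with rfl | hb
    · rcases eq_or_ne a 0 with rfl | ha
      · rw [if_pos rfl, if_pos rfl]; ring
      · rw [if_pos rfl, if_neg ha, if_neg (fun h => ha h.symm)]; ring
    · rw [if_neg hb]
      rcases eq_or_ne a 0 with rfl | ha
      · rw [if_neg (fun h => hb h.symm), if_pos rfl]; ring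
      · rw [if_neg ha]
        rcases eq_or_ne a b with rfl | hab
        · rw [if_pos rfl, if_pos rfl]; ring
        · rw [if_neg hab, if_neg (Ne.symm hab)]; ring
  rw [Finset.sum_congr rfl fun b _ => expand b, Finset.sum_sub_distrib,
    ← Finset.mul_sum, Vm_colsum]
  rcases eq_or_ne a 0 with rfl | ha
  · have hz : ∀ b : Fin q,
        (if (0:Fin q) = 0 then (0:ℝ) else if b = 0 then Vm q b c else 0) = 0 :=
      fun b => by simp
    rw [Finset.sum_congr rfl fun b _ => hz b, Finset.sum_const_zero, sub_zero,
      Matrix.one_apply]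
    rcases eq_or_ne c 0 with rfl | hc
    · rw [if_pos rfl, if_pos rfl, inv_mul_cancel₀ hq0]
    · rw [if_neg hc, if_neg (fun h => hc h.symm), mul_zero]
  · have hz : ∀ b : Fin q,
        (if a = 0 then (0:ℝ) else if b = a then Vm q b c else 0)
          = if b = a then Vm q b c else 0 := fun b => by rw [if_neg ha]
    rw [Finset.sum_congr rfl fun b _ => hz b,
      Finset.sum_ite_eq' Finset.univ a fun b => Vm q b c,
      if_pos (Finset.mem_univ a), Matrix.one_apply]
    rcases eq_or_ne c 0 with rfl | hc
    · rw [if_pos rfl, Vm_apply_zero, if_neg ha]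
      field_simp
      norm_num
    · rw [if_neg hc, Vm_apply_ne ha hc, mul_zero]
      rcases eq_or_ne a c with rfl | hac
      · rw [if_pos rfl, if_pos rfl]; norm_num
      · rw [if_neg hac, if_neg hac]; norm_num

lemma charpoly_conj {n R : Type*} [DecidableEq n] [Fintype n] [CommRing R]
    (S T D : Matrix n n R) (hST : S * T = 1) :
    (S * D * T).charpoly = D.charpoly := by
  classical
  set S' := (Polynomial.C : R →+* R[X]).mapMatrix S with hS'
  set T' := (Polynomial.C : R →+* R[X]).mapMatrix T with hT'
  have hST' : S' * T' = 1 := by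
    rw [hS', hT', ← _root_.map_mul, hST, _root_.map_one]
  have hm : Matrix.charmatrix (S * D * T)
      = S' * Matrix.charmatrix D * T' := by
    unfold Matrix.charmatrix
    rw [mul_sub, sub_mul, _root_.map_mul, _root_.map_mul]
    congr 1
    · have hscalar : (Matrix.scalar n (Polynomial.X : R[X])) = (Polynomial.X : R[X]) • 1 := by
        rw [Matrix.scalar_apply, smul_eq_diagonal_mul, mul_one]
      rw [hscalar, Matrix.mul_smul, mul_one, Matrix.smul_mul, hST']
  rw [Matrix.charpoly, hm, Matrix.det_mul, Matrix.det_mul, Matrix.charpoly]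
  have : S'.det * T'.det = 1 := by
    rw [← Matrix.det_mul, hST', Matrix.det_one]
  calc S'.det * (Matrix.charmatrix D).det * T'.det
      = (Matrix.charmatrix D).det * (S'.det * T'.det) := by ring
    _ = (Matrix.charmatrix D).det := by rw [this, mul_one]

lemma charpoly_diagonal {n R : Type*} [DecidableEq n] [Fintype n] [CommRing R]
    (d : n → R) :
    (Matrix.diagonal d).charpoly = ∏ i : n, (X - C (d i)) := by
  classical
  rw [Matrix.charpoly]
  have : Matrix.charmatrix (Matrix.diagonal d)
      = Matrix.diagonal fun i => (X : R[X]) - C (d i) := by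
    ext i j
    rcases eq_or_ne i j with rfl | h
    · rw [Matrix.charmatrix_apply_eq, Matrix.diagonal_apply_eq, Matrix.diagonal_apply_eq]
    · rw [Matrix.charmatrix_apply_ne _ _ _ h, Matrix.diagonal_apply_ne _ h,
        Matrix.diagonal_apply_ne _ h, map_zero, neg_zero]
  rw [this, Matrix.det_diagonal]

/-- The diagonal matrix of eigenvalues. -/
noncomputable def Dm (q l : ℕ) [NeZero q] : Matrix (Fin q × Fin q) (Fin q × Fin q) ℝ :=
  Matrix.diagonal fun p => if p.2 = 0 then (if p.1 = 0 then (q : ℝ) * l else 0) else (l : ℝ)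

lemma BBt_mul_V [NeZero q] (hq : q.Prime) {l : ℕ} (hl : q ∣ l) :
    (arrayB q l * (arrayB q l)ᵀ) * (Vm q ⊗ₖ Vm q) = (Vm q ⊗ₖ Vm q) * Dm q l := by
  have hL : (l : ℝ) = (q : ℝ) * ((l / q : ℕ) : ℝ) := by
    rw [← Nat.cast_mul, Nat.mul_div_cancel' hl]
  set m : ℝ := ((l / q : ℕ) : ℝ) with hm
  ext ⟨i, a⟩ ⟨j, b⟩
  simp only [Dm]
  rw [Matrix.mul_apply, Matrix.mul_diagonal, Fintype.sum_prod_type]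
  have inner : ∀ i' : Fin q,
      (∑ a' : Fin q, (arrayB q l * (arrayB q l)ᵀ) (i, a) (i', a')
        * (Vm q ⊗ₖ Vm q) (i', a') (j, b))
      = if i = i' then (l : ℝ) * Vm q i j * Vm q a b
        else m * Vm q i' j * (if b = 0 then (q : ℝ) else 0) := by
    intro i'
    rcases eq_or_ne i i' with rfl | h
    · rw [if_pos rfl]
      have term : ∀ a' : Fin q,
          (arrayB q l * (arrayB q l)ᵀ) (i, a) (i, a') * (Vm q ⊗ₖ Vm q) (i, a') (j, b)
          = if a = a' then (l : ℝ) * (Vm q i j * Vm q a' b) else 0 := by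
        intro a'
        rw [BBt_apply hq hl, if_pos rfl, Matrix.kroneckerMap_apply]
        split_ifs <;> ring
      rw [Finset.sum_congr rfl fun a' _ => term a',
        Finset.sum_ite_eq Finset.univ a fun a' => (l : ℝ) * (Vm q i j * Vm q a' b),
        if_pos (Finset.mem_univ a)]
      ring
    · rw [if_neg h]
      have term : ∀ a' : Fin q,
          (arrayB q l * (arrayB q l)ᵀ) (i, a) (i', a') * (Vm q ⊗ₖ Vm q) (i', a') (j, b)
          = m * Vm q i' j * Vm q a' b := by
        intro a'
        rw [BBt_apply hq hl, if_neg h, Matrix.kroneckerMap_apply]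
        ring
      rw [Finset.sum_congr rfl fun a' _ => term a', ← Finset.mul_sum, Vm_colsum]
  rw [Finset.sum_congr rfl fun i' _ => inner i']
  have split : ∀ i' : Fin q,
      (if i = i' then (l : ℝ) * Vm q i j * Vm q a b
        else m * Vm q i' j * (if b = 0 then (q : ℝ) else 0))
      = m * Vm q i' j * (if b = 0 then (q : ℝ) else 0)
        + (if i = i' then (l : ℝ) * Vm q i' j * Vm q a b
            - m * Vm q i' j * (if b = 0 then (q : ℝ) else 0) else 0) := by
    intro i'
    rcases eq_or_ne i i' with rfl | h
    · rw [if_pos rfl, if_pos rfl]; ring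
    · rw [if_neg h, if_neg h]; ring
  rw [Finset.sum_congr rfl fun i' _ => split i', Finset.sum_add_distrib,
    Finset.sum_ite_eq Finset.univ i, if_pos (Finset.mem_univ i)]
  have hcol : ∑ i' : Fin q, m * Vm q i' j * (if b = 0 then (q : ℝ) else 0)
      = m * (if j = 0 then (q : ℝ) else 0) * (if b = 0 then (q : ℝ) else 0) := by
    have : ∀ i' : Fin q, m * Vm q i' j * (if b = 0 then (q : ℝ) else 0)
        = Vm q i' j * (m * (if b = 0 then (q : ℝ) else 0)) := fun i' => by ring
    rw [Finset.sum_congr rfl fun i' _ => this i', ← Finset.sum_mul, Vm_colsum]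
    ring
  rw [hcol, Matrix.kroneckerMap_apply]
  dsimp only
  rcases eq_or_ne b 0 with rfl | hb
  · rw [if_pos rfl, if_pos rfl, Vm_apply_zero]
    rcases eq_or_ne j 0 with rfl | hj
    · rw [if_pos rfl, if_pos rfl, Vm_apply_zero, hL]
      ring
    · rw [if_neg hj, if_neg hj, hL]
      ring
  · rw [if_neg hb, if_neg hb]
    ring

end ArrayBAux

open ArrayBAux Kronecker in
theorem arrayB_charpoly_of_dvd (q l : ℕ) (hq : q.Prime) (hql : q ≤ l) (hdvd : l % q = 0) :
    (arrayB q l * (arrayB q l)ᵀ).charpoly =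
      (X - C ((q : ℝ) * l)) * (X - C (l : ℝ)) ^ (q * (q - 1)) * X ^ (q - 1) := by
  haveI : NeZero q := ⟨hq.ne_zero⟩
  have hl : q ∣ l := Nat.dvd_of_mod_eq_zero hdvd
  have hST : (Vm q ⊗ₖ Vm q) * (Wm q ⊗ₖ Wm q) = 1 := by
    rw [← Matrix.mul_kronecker_mul, Vm_mul_Wm, Matrix.one_kronecker_one]
  have hTS : (Wm q ⊗ₖ Wm q) * (Vm q ⊗ₖ Vm q) = 1 := by
    rw [← Matrix.mul_kronecker_mul, Wm_mul_Vm, Matrix.one_kronecker_one]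
  have hM : arrayB q l * (arrayB q l)ᵀ
      = (Vm q ⊗ₖ Vm q) * Dm q l * (Wm q ⊗ₖ Wm q) := by
    calc arrayB q l * (arrayB q l)ᵀ
        = arrayB q l * (arrayB q l)ᵀ * ((Vm q ⊗ₖ Vm q) * (Wm q ⊗ₖ Wm q)) := by
          rw [hST, mul_one]
      _ = (arrayB q l * (arrayB q l)ᵀ * (Vm q ⊗ₖ Vm q)) * (Wm q ⊗ₖ Wm q) := by
          rw [mul_assoc]
      _ = (Vm q ⊗ₖ Vm q) * Dm q l * (Wm q ⊗ₖ Wm q) := by rw [BBt_mul_V hq hl]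
  rw [hM, charpoly_conj _ _ _ hST]
  simp only [Dm]
  rw [ArrayBAux.charpoly_diagonal, Fintype.prod_prod_type]
  dsimp only
  have hinner : ∀ j : Fin q,
      (∏ b : Fin q, ((X : ℝ[X])
          - C (if b = 0 then (if j = 0 then (q : ℝ) * l else 0) else (l : ℝ))))
      = ((X : ℝ[X]) - C (if j = 0 then (q : ℝ) * l else 0))
          * ((X : ℝ[X]) - C (l : ℝ)) ^ (q - 1) := by
    intro j
    rw [← Finset.mul_prod_erase Finset.univ _ (Finset.mem_univ (0 : Fin q))]
    congr 1
    · rw [Finset.prod_congr rfl fun b hb => by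
          rw [if_neg (Finset.ne_of_mem_erase hb)],
        Finset.prod_const, Finset.card_erase_of_mem (Finset.mem_univ _),
        Finset.card_univ, Fintype.card_fin]
  rw [Finset.prod_congr rfl fun j _ => hinner j, Finset.prod_mul_distrib,
    Finset.prod_const, Finset.card_univ, Fintype.card_fin]
  have houter : (∏ j : Fin q, ((X : ℝ[X]) - C (if j = 0 then (q : ℝ) * l else 0)))
      = ((X : ℝ[X]) - C ((q : ℝ) * l)) * (X : ℝ[X]) ^ (q - 1) := by
    rw [← Finset.mul_prod_erase Finset.univ _ (Finset.mem_univ (0 : Fin q))]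
    congr 1
    · rw [Finset.prod_congr rfl fun j hj => by
          rw [if_neg (Finset.ne_of_mem_erase hj), map_zero, sub_zero],
        Finset.prod_const, Finset.card_erase_of_mem (Finset.mem_univ _),
        Finset.card_univ, Fintype.card_fin]
  rw [houter, ← pow_mul, Nat.mul_comm (q - 1) q]
  ring
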